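/- arXiv:1909.03224 — 3 statements merged into one kernel-verified Lean document; each statement's English description precedes it below -/
import Mathlib

section
/- Let T > 0, C > 0, r_0 ≥ 0. Suppose for each ε ∈ (0,1), g^{(ε)} : [-r_0, ∞) → [0, ∞) satisfies g^{(ε)}(s) = 0 for s ∈ [-r_0, 0], the function t ↦ ‖g^{(ε)}_t‖_2² is integrable on [0,T], and |g^{(ε)}(t)|² ≤ C ∫_0^t ‖g^{(ε)}_r‖_2² dr + h^{(ε)}(t) for all t ∈ [0,T], where h^{(ε)} : [0,T] → [0,∞) is measurable, sup over ε ∈ (0,1) and t ∈ [0,T] of h^{(ε)}(t) is finite, and h^{(ε)}(t) → 0 as ε ↓ 0 for each t ∈ [0,T]. Then ‖g^{(ε)}_t‖_2 → 0 as ε ↓ 0 for every t ∈ [0,T]. -/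
open MeasureTheory Filter Set Topology

/-- Segment-norm squared: `‖f_t‖₂² = ∫_{-r₀}^0 (f(t+s))² ds + (f t)²`. -/
noncomputable def segNormSq (r₀ : ℝ) (f : ℝ → ℝ) (t : ℝ) : ℝ :=
  (∫ s in (-r₀)..0, (f (t + s))^2) + (f t)^2

/-- Gronwall iteration constants. -/
noncomputable def gwM (c : ℝ) : ℕ → ℝ
  | 0 => 0
  | k+1 => 2 + c * gwM c k

lemma gwM_nonneg {c : ℝ} (hc : 0 ≤ c) : ∀ k, 0 ≤ gwM c k
  | 0 => le_refl 0
  | k+1 => by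
      have h := gwM_nonneg hc k
      have : 0 ≤ c * gwM c k := mul_nonneg hc h
      simp only [gwM]
      linarith

/-- An integral-form Gronwall inequality proved by iterating over small intervals. -/
lemma gronwall_aux (T a b : ℝ) (hT : 0 ≤ T) (hb : 0 < b) (ha : 0 ≤ a)
    (ψ : ℝ → ℝ) (hψ0 : ψ 0 = 0)
    (hmono : MonotoneOn ψ (Set.Icc 0 T)) (hcont : ContinuousOn ψ (Set.Icc 0 T))
    (hineq : ∀ t ∈ Set.Icc 0 T, ψ t ≤ a + b * ∫ r in (0:ℝ)..t, ψ r) :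
    ∀ k : ℕ, ∀ t ∈ Set.Icc 0 T, t ≤ (k : ℝ) * (1 / (2 * b)) →
      ψ t ≤ a * gwM (2 * b * T) k := by
  have hbT : 0 ≤ 2 * b * T := by positivity
  have hψint : ∀ u v : ℝ, 0 ≤ u → u ≤ v → v ≤ T → IntervalIntegrable ψ volume u v := by
    intro u v hu huv hvT
    apply ContinuousOn.intervalIntegrable
    apply hcont.mono
    rw [Set.uIcc_of_le huv]
    exact Set.Icc_subset_Icc hu hvT
  intro k
  induction k with
  | zero =>
      intro t ht hle
      have ht0 : t = 0 := le_antisymm (by simpa using hle) ht.1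
      simp [ht0, hψ0, gwM]
  | succ k IH =>
      intro t ht hle
      set δ : ℝ := 1 / (2 * b) with hδ
      have hδpos : 0 < δ := by positivity
      set c : ℝ := min t ((k : ℝ) * δ) with hc
      have hc0 : 0 ≤ c := le_min ht.1 (by positivity)
      have hct : c ≤ t := min_le_left _ _
      have hcT : c ≤ T := hct.trans ht.2
      have hψtnn : 0 ≤ ψ t := by
        have := hmono (Set.mem_Icc.2 ⟨le_refl 0, hT⟩) ht ht.1
        rw [hψ0] at this; exact this
      have hMk : 0 ≤ gwM (2 * b * T) k := gwM_nonneg hbT k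
      have hsplit : (∫ r in (0:ℝ)..t, ψ r)
          = (∫ r in (0:ℝ)..c, ψ r) + ∫ r in c..t, ψ r :=
        (intervalIntegral.integral_add_adjacent_intervals
          (hψint 0 c le_rfl hc0 hcT) (hψint c t hc0 hct ht.2)).symm
      have h1 : (∫ r in (0:ℝ)..c, ψ r) ≤ T * (a * gwM (2 * b * T) k) := by
        have hle1 : (∫ r in (0:ℝ)..c, ψ r)
            ≤ ∫ _r in (0:ℝ)..c, (a * gwM (2 * b * T) k) := by
          apply intervalIntegral.integral_mono_on hc0 (hψint 0 c le_rfl hc0 hcT)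
            intervalIntegrable_const
          intro x hx
          exact IH x ⟨hx.1, hx.2.trans hcT⟩ (hx.2.trans (min_le_right _ _))
        rw [intervalIntegral.integral_const, smul_eq_mul, sub_zero] at hle1
        refine hle1.trans ?_
        exact mul_le_mul_of_nonneg_right hcT (by positivity)
      have h2 : (∫ r in c..t, ψ r) ≤ δ * ψ t := by
        have hle2 : (∫ r in c..t, ψ r) ≤ ∫ _r in c..t, ψ t := by
          apply intervalIntegral.integral_mono_on hct (hψint c t hc0 hct ht.2)
            intervalIntegrable_const
          intro x hx
          exact hmono ⟨hc0.trans hx.1, hx.2.trans ht.2⟩ ht hx.2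
        rw [intervalIntegral.integral_const, smul_eq_mul] at hle2
        refine hle2.trans ?_
        have htc : t - c ≤ δ := by
          rcases le_total t ((k : ℝ) * δ) with h' | h'
          · rw [hc, min_eq_left h']; linarith
          · rw [hc, min_eq_right h']
            have : t ≤ (k : ℝ) * δ + δ := by
              have : ((k : ℕ) + 1 : ℝ) * δ = (k : ℝ) * δ + δ := by ring
              push_cast at hle
              linarith
            linarith
        exact mul_le_mul_of_nonneg_right htc hψtnn
      have hbδ : b * δ = 1 / 2 := by
        rw [hδ]; field_simp
      have hkey := hineq t ht
      rw [hsplit] at hkey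
      have hIsum : (∫ r in (0:ℝ)..c, ψ r) + (∫ r in c..t, ψ r)
          ≤ T * (a * gwM (2 * b * T) k) + δ * ψ t := add_le_add h1 h2
      have hmul := mul_le_mul_of_nonneg_left hIsum hb.le
      have hring : b * (T * (a * gwM (2 * b * T) k) + δ * ψ t)
          = b * T * (a * gwM (2 * b * T) k) + (b * δ) * ψ t := by ring
      rw [hring, hbδ] at hmul
      have hfin : ψ t ≤ 2 * a + 2 * b * T * (a * gwM (2 * b * T) k) := by linarith
      have : a * gwM (2 * b * T) (k + 1)
          = 2 * a + 2 * b * T * (a * gwM (2 * b * T) k) := by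
        simp only [gwM]; ring
      linarith

theorem stmt0 (d : ℕ) (T C r₀ : ℝ) (hT : 0 < T) (hC : 0 < C) (hr₀ : 0 ≤ r₀)
    (g h : ℝ → ℝ → ℝ)
    (hg_nonneg : ∀ ε ∈ Set.Ioo (0:ℝ) 1, ∀ t, -r₀ ≤ t → 0 ≤ g ε t)
    (hg_zero : ∀ ε ∈ Set.Ioo (0:ℝ) 1, ∀ s ∈ Set.Icc (-r₀) 0, g ε s = 0)
    (hg_int : ∀ ε ∈ Set.Ioo (0:ℝ) 1,
      IntegrableOn (fun t => segNormSq r₀ (g ε) t) (Set.Icc 0 T))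
    (hg_bd : ∀ ε ∈ Set.Ioo (0:ℝ) 1, ∀ t ∈ Set.Icc 0 T,
      (g ε t)^2 ≤ C * (∫ r in (0:ℝ)..t, segNormSq r₀ (g ε) r) + h ε t)
    (hh_meas : ∀ ε ∈ Set.Ioo (0:ℝ) 1, Measurable (h ε))
    (hh_nonneg : ∀ ε ∈ Set.Ioo (0:ℝ) 1, ∀ t ∈ Set.Icc 0 T, 0 ≤ h ε t)
    (hh_sup : ∃ M : ℝ, ∀ ε ∈ Set.Ioo (0:ℝ) 1, ∀ t ∈ Set.Icc 0 T, h ε t ≤ M)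
    (hh_lim : ∀ t ∈ Set.Icc 0 T,
      Tendsto (fun ε => h ε t) (nhdsWithin 0 (Set.Ioo 0 1)) (nhds 0)) :
    ∀ t ∈ Set.Icc 0 T,
      Tendsto (fun ε => Real.sqrt (segNormSq r₀ (g ε) t))
        (nhdsWithin 0 (Set.Ioo 0 1)) (nhds 0) := by
  intro t ht
  obtain ⟨M', hM'⟩ := hh_sup
  have hbpos : (0:ℝ) < C + 1 := by positivity
  set n : ℕ := ⌈2 * (C + 1) * T⌉₊ with hn
  set K : ℝ := gwM (2 * (C + 1) * T) n with hK
  have hKnn : 0 ≤ K := gwM_nonneg (by positivity) n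
  have hTn : T ≤ (n : ℝ) * (1 / (2 * (C + 1))) := by
    rw [mul_one_div, le_div_iff₀ (by positivity)]
    calc T * (2 * (C + 1)) = 2 * (C + 1) * T := by ring
    _ ≤ (n : ℝ) := Nat.le_ceil _
  -- the key upper bound, valid for every ε ∈ (0,1)
  have key : ∀ ε ∈ Set.Ioo (0:ℝ) 1,
      segNormSq r₀ (g ε) t
        ≤ (C + 1) * ((∫ r in Set.Ioc (0:ℝ) T, h ε r) * K) + h ε t := by
    intro ε hε
    set f : ℝ → ℝ := segNormSq r₀ (g ε) with hf
    have hfnn : ∀ s, 0 ≤ f s := by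
      intro s
      rw [hf]
      unfold segNormSq
      apply add_nonneg
      · apply intervalIntegral.integral_nonneg (by linarith : -r₀ ≤ (0:ℝ))
        intro u _; positivity
      · positivity
    have hfint : IntegrableOn f (Set.Icc 0 T) := hg_int ε hε
    have hfintOn : ∀ s : ℝ, s ≤ T → IntegrableOn f (Set.Ioc 0 s) := by
      intro s hs
      exact hfint.mono_set (fun x hx => ⟨hx.1.le, hx.2.trans hs⟩)
    set ψ : ℝ → ℝ := fun s => ∫ r in (0:ℝ)..s, f r with hψ
    have hψcont : ContinuousOn ψ (Set.Icc 0 T) := by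
      have h' : IntegrableOn f (Set.uIcc 0 T) := by
        rwa [Set.uIcc_of_le hT.le]
      have := intervalIntegral.continuousOn_primitive_interval (a := (0:ℝ)) (b := T)
        (μ := volume) (f := f) h'
      rwa [Set.uIcc_of_le hT.le] at this
    have hψ0 : ψ 0 = 0 := intervalIntegral.integral_same
    have hψmono : MonotoneOn ψ (Set.Icc 0 T) := by
      intro u hu v hv huv
      apply intervalIntegral.integral_mono_interval le_rfl hu.1 huv
      · exact ae_restrict_of_forall_mem measurableSet_Ioc fun x _ => hfnn x
      · rw [intervalIntegrable_iff_integrableOn_Ioc_of_le hv.1]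
        exact hfintOn v hv.2
    -- pointwise key inequality
    have hkey : ∀ s ∈ Set.Icc (0:ℝ) T, f s ≤ (C + 1) * ψ s + h ε s := by
      intro s hs
      have hIeq : (∫ u in (-r₀)..0, (g ε (s + u))^2)
          = ∫ u in (s - r₀)..s, (g ε u)^2 := by
        have := intervalIntegral.integral_comp_add_left
          (a := -r₀) (b := 0) (fun u => (g ε u)^2) s
        simpa [sub_eq_add_neg] using this
      have hIle : (∫ u in (s - r₀)..s, (g ε u)^2) ≤ ∫ u in Set.Ioc (0:ℝ) s, f u := by
        rw [intervalIntegral.integral_of_le (by linarith [hs.1] : s - r₀ ≤ s)]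
        rw [← integral_indicator measurableSet_Ioc, ← integral_indicator measurableSet_Ioc]
        apply integral_mono_of_nonneg
        · filter_upwards with u
          exact Set.indicator_nonneg (fun x _ => by positivity) u
        · rw [integrable_indicator_iff measurableSet_Ioc]
          exact hfintOn s hs.2
        · filter_upwards with u
          by_cases hu : u ∈ Set.Ioc (s - r₀) s
          · rw [Set.indicator_of_mem hu]
            by_cases hu0 : u ≤ 0
            · have hgz : g ε u = 0 := hg_zero ε hε u ⟨by linarith [hu.1, hs.1], hu0⟩
              rw [hgz]
              simpa using Set.indicator_nonneg (fun x _ => hfnn x) u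
            · push_neg at hu0
              rw [Set.indicator_of_mem (Set.mem_Ioc.mpr ⟨hu0, hu.2⟩)]
              have hInn : 0 ≤ ∫ w in (-r₀)..0, (g ε (u + w))^2 :=
                intervalIntegral.integral_nonneg (by linarith) (fun _ _ => by positivity)
              have : f u = (∫ w in (-r₀)..0, (g ε (u + w))^2) + (g ε u)^2 := rfl
              rw [this]
              linarith
          · rw [Set.indicator_of_notMem hu]
            exact Set.indicator_nonneg (fun x _ => hfnn x) u
      have hgb := hg_bd ε hε s hs
      have hψs : ψ s = ∫ u in Set.Ioc (0:ℝ) s, f u := intervalIntegral.integral_of_le hs.1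
      have hfs : f s = (∫ u in (-r₀)..0, (g ε (s + u))^2) + (g ε s)^2 := rfl
      have hψs' : (∫ r in (0:ℝ)..s, segNormSq r₀ (g ε) r) = ψ s := rfl
      rw [hψs'] at hgb
      rw [hψs] at hgb
      rw [hfs, hIeq, hψs]
      linarith
    -- integrability of h on Ioc 0 T
    have hhint : IntegrableOn (h ε) (Set.Ioc 0 T) := by
      apply Integrable.mono' (g := fun _ => M')
        (integrableOn_const measure_Ioc_lt_top.ne)
        ((hh_meas ε hε).aestronglyMeasurable.restrict)
      apply ae_restrict_of_forall_mem measurableSet_Ioc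
      intro x hx
      have hx' : x ∈ Set.Icc (0:ℝ) T := ⟨hx.1.le, hx.2⟩
      rw [Real.norm_eq_abs, abs_of_nonneg (hh_nonneg ε hε x hx')]
      exact hM' ε hε x hx'
    set A : ℝ := ∫ r in Set.Ioc (0:ℝ) T, h ε r with hA
    have hAnn : 0 ≤ A :=
      setIntegral_nonneg measurableSet_Ioc (fun x hx => hh_nonneg ε hε x ⟨hx.1.le, hx.2⟩)
    -- integral inequality for ψ
    have hψineq : ∀ s ∈ Set.Icc (0:ℝ) T, ψ s ≤ A + (C + 1) * ∫ r in (0:ℝ)..s, ψ r := by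
      intro s hs
      have hψints : IntegrableOn ψ (Set.Ioc 0 s) := by
        have : IntegrableOn ψ (Set.Icc 0 s) :=
          (hψcont.mono (Set.Icc_subset_Icc le_rfl hs.2)).integrableOn_Icc
        exact this.mono_set Set.Ioc_subset_Icc_self
      have hhints : IntegrableOn (h ε) (Set.Ioc 0 s) :=
        hhint.mono_set (Set.Ioc_subset_Ioc le_rfl hs.2)
      have h1 : ψ s = ∫ u in Set.Ioc (0:ℝ) s, f u := intervalIntegral.integral_of_le hs.1
      have h2 : (∫ u in Set.Ioc (0:ℝ) s, f u)
          ≤ ∫ u in Set.Ioc (0:ℝ) s, ((C + 1) * ψ u + h ε u) := by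
        apply setIntegral_mono_on (hfintOn s hs.2)
          ((hψints.const_mul _).add hhints) measurableSet_Ioc
        intro u hu
        exact hkey u ⟨hu.1.le, hu.2.trans hs.2⟩
      have h3 : (∫ u in Set.Ioc (0:ℝ) s, ((C + 1) * ψ u + h ε u))
          = (C + 1) * (∫ u in Set.Ioc (0:ℝ) s, ψ u) + ∫ u in Set.Ioc (0:ℝ) s, h ε u := by
        rw [integral_add (hψints.const_mul _) hhints, integral_const_mul]
      have h4 : (∫ u in Set.Ioc (0:ℝ) s, h ε u) ≤ A := by
        rw [hA]
        apply setIntegral_mono_set hhint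
        · exact ae_restrict_of_forall_mem measurableSet_Ioc
            (fun x hx => hh_nonneg ε hε x ⟨hx.1.le, hx.2⟩)
        · exact (Set.Ioc_subset_Ioc le_rfl hs.2).eventuallyLE
      have h5 : (∫ u in Set.Ioc (0:ℝ) s, ψ u) = ∫ r in (0:ℝ)..s, ψ r :=
        (intervalIntegral.integral_of_le hs.1).symm
      rw [h1]
      calc (∫ u in Set.Ioc (0:ℝ) s, f u)
          ≤ (C + 1) * (∫ u in Set.Ioc (0:ℝ) s, ψ u) + ∫ u in Set.Ioc (0:ℝ) s, h ε u := by
            rw [← h3]; exact h2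
        _ ≤ (C + 1) * (∫ r in (0:ℝ)..s, ψ r) + A := by rw [h5]; linarith
        _ = A + (C + 1) * ∫ r in (0:ℝ)..s, ψ r := by ring
    -- Gronwall
    have hg1 := gronwall_aux T A (C + 1) hT.le hbpos hAnn ψ hψ0 hψmono hψcont hψineq
    have hψt : ψ t ≤ A * K := hg1 n t ht (ht.2.trans hTn)
    have hft := hkey t ht
    calc segNormSq r₀ (g ε) t = f t := rfl
      _ ≤ (C + 1) * ψ t + h ε t := hft
      _ ≤ (C + 1) * (A * K) + h ε t := by
          have := mul_le_mul_of_nonneg_left hψt hbpos.le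
          linarith
  -- convergence of the dominating term
  have hA0 : Tendsto (fun ε => ∫ r in Set.Ioc (0:ℝ) T, h ε r)
      (nhdsWithin 0 (Set.Ioo 0 1)) (𝓝 0) := by
    have hconv : Tendsto (fun ε => ∫ r in Set.Ioc (0:ℝ) T, h ε r)
        (nhdsWithin 0 (Set.Ioo 0 1)) (𝓝 (∫ _r in Set.Ioc (0:ℝ) T, (0:ℝ))) := by
      apply MeasureTheory.tendsto_integral_filter_of_dominated_convergence
        (μ := volume.restrict (Set.Ioc 0 T)) (f := fun _ => (0:ℝ)) (fun _ => M')
      · filter_upwards [self_mem_nhdsWithin] with ε hε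
        exact (hh_meas ε hε).aestronglyMeasurable.restrict
      · filter_upwards [self_mem_nhdsWithin] with ε hε
        apply ae_restrict_of_forall_mem measurableSet_Ioc
        intro x hx
        have hx' : x ∈ Set.Icc (0:ℝ) T := ⟨hx.1.le, hx.2⟩
        rw [Real.norm_eq_abs, abs_of_nonneg (hh_nonneg ε hε x hx')]
        exact hM' ε hε x hx'
      · exact integrableOn_const measure_Ioc_lt_top.ne
      · exact ae_restrict_of_forall_mem measurableSet_Ioc
          (fun x hx => hh_lim x ⟨hx.1.le, hx.2⟩)
    simpa using hconv
  -- squeeze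
  have hF0 : ∀ᶠ ε in nhdsWithin (0:ℝ) (Set.Ioo 0 1), 0 ≤ segNormSq r₀ (g ε) t := by
    filter_upwards with ε
    unfold segNormSq
    apply add_nonneg
    · apply intervalIntegral.integral_nonneg (by linarith : -r₀ ≤ (0:ℝ))
      intro u _; positivity
    · positivity
  have hFle : ∀ᶠ ε in nhdsWithin (0:ℝ) (Set.Ioo 0 1),
      segNormSq r₀ (g ε) t
        ≤ (C + 1) * ((∫ r in Set.Ioc (0:ℝ) T, h ε r) * K) + h ε t := by
    filter_upwards [self_mem_nhdsWithin] with ε hε using key ε hε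
  have hlim2 : Tendsto
      (fun ε => (C + 1) * ((∫ r in Set.Ioc (0:ℝ) T, h ε r) * K) + h ε t)
      (nhdsWithin 0 (Set.Ioo 0 1)) (𝓝 0) := by
    have := ((hA0.mul_const K).const_mul (C + 1)).add (hh_lim t ht)
    simpa using this
  have hsq : Tendsto (fun ε => segNormSq r₀ (g ε) t)
      (nhdsWithin 0 (Set.Ioo 0 1)) (𝓝 0) := squeeze_zero' hF0 hFle hlim2
  have := (Real.continuous_sqrt.tendsto 0).comp hsq
  simpa [Function.comp_def] using this
end

section
/- Let r_0 ≥ 0 and T ≥ r_0. Let x, y : [-r_0, T] → ℝ^d be (Bochner) integrable paths with x(s) = ξ(s), y(s) = η(s) for s ∈ [-r_0,0], and suppose |x(t) - y(t)|² ≤ |ξ(0) - η(0)|² Γ(t)² 1_{[0,T-r_0]}(t) for t ∈ [0,T], where Γ : [0,T-r_0] → [0,∞) satisfies Γ(s) ≤ e^{Ks}. Then ∫_0^T ‖x_t - y_t‖_2² dt ≤ r_0 ‖ξ - η‖_2² + (T+1) · ((e^{2K(T-r_0)} - 1)/(2K)) · |ξ(0) - η(0)|², with (e^{2K(T-r_0)}-1)/(2K)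 interpreted as T-r_0 for K=0. -/
open MeasureTheory Set

/-- Segment-norm squared for a vector-valued path:
`‖f_t‖₂² = ∫_{-r₀}^0 ‖f(t+s)‖² ds + ‖f t‖²`. -/
noncomputable def segNormSqV (d : ℕ) (r₀ : ℝ) (f : ℝ → EuclideanSpace ℝ (Fin d))
    (t : ℝ) : ℝ :=
  (∫ s in (-r₀)..0, ‖f (t + s)‖^2) + ‖f t‖^2

theorem aux5 (r₀ T K : ℝ) (hr₀ : 0 ≤ r₀) (hT : r₀ ≤ T) (g : ℝ → ℝ)
    (hg : ∀ t, 0 ≤ g t)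
    (hint : IntegrableOn g (Set.Icc (-r₀) T))
    (hb : ∀ t ∈ Set.Icc (0:ℝ) T, g t ≤
      if t ≤ T - r₀ then g 0 * Real.exp (2 * K * t) else 0) :
    (∫ t in (0:ℝ)..T, ((∫ s in (-r₀)..0, g (t + s)) + g t)) ≤
      r₀ * ((∫ s in (-r₀)..0, g s) + g 0) +
      (T + 1) * (if K = 0 then T - r₀ else
        (Real.exp (2 * K * (T - r₀)) - 1) / (2 * K)) * g 0 := by
  have hT0 : (0:ℝ) ≤ T := le_trans hr₀ hT
  have hTr : (0:ℝ) ≤ T - r₀ := by linarith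
  set C : ℝ := if K = 0 then T - r₀ else
      (Real.exp (2 * K * (T - r₀)) - 1) / (2 * K) with hCdef
  have hC_eq : (∫ s in (0:ℝ)..(T - r₀), Real.exp (2 * K * s)) = C := by
    rw [hCdef]
    split_ifs with h
    · simp [h]
    · have h2 : (2 * K) ≠ 0 := mul_ne_zero two_ne_zero h
      rw [intervalIntegral.integral_comp_mul_left Real.exp h2, integral_exp]
      simp [smul_eq_mul]
      ring
  set g' : ℝ → ℝ := (Set.Icc (-r₀) T).indicator g with hg'def
  have hg'int : Integrable g' := hint.integrable_indicator measurableSet_Icc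
  have hg'nn : ∀ t, 0 ≤ g' t := fun t => Set.indicator_nonneg (fun s _ => hg s) t
  have hgeq : ∀ t ∈ Set.Icc (-r₀) T, g' t = g t := fun t ht => indicator_of_mem ht g
  have II : ∀ a b : ℝ, IntervalIntegrable g' volume a b :=
    fun a b => hg'int.intervalIntegrable
  have hnn : ∀ a b : ℝ, a ≤ b → 0 ≤ ∫ t in a..b, g' t :=
    fun a b hab => intervalIntegral.integral_nonneg hab fun u _ => hg'nn u
  -- bound on ∫_0^T g'
  have hB : (∫ t in (0:ℝ)..T, g' t) ≤ g 0 * C := by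
    have hsplit : (∫ t in (0:ℝ)..T, g' t) =
        (∫ t in (0:ℝ)..(T - r₀), g' t) + ∫ t in (T - r₀)..T, g' t :=
      (intervalIntegral.integral_add_adjacent_intervals (II _ _) (II _ _)).symm
    have h1 : (∫ t in (0:ℝ)..(T - r₀), g' t) ≤
        ∫ t in (0:ℝ)..(T - r₀), g 0 * Real.exp (2 * K * t) := by
      have hcont : Continuous fun t : ℝ => g 0 * Real.exp (2 * K * t) := by continuity
      apply intervalIntegral.integral_mono_on hTr (II _ _) (hcont.intervalIntegrable _ _)
      intro t ht
      rw [hgeq t ⟨by linarith [ht.1], by linarith [ht.2]⟩]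
      have hbt := hb t ⟨ht.1, by linarith [ht.2]⟩
      rwa [if_pos ht.2] at hbt
    have h2 : (∫ t in (T - r₀)..T, g' t) ≤ 0 := by
      rw [intervalIntegral.integral_of_le (by linarith)]
      apply setIntegral_nonpos measurableSet_Ioc
      intro t ht
      rw [hgeq t ⟨by linarith [ht.1], ht.2⟩]
      have hbt := hb t ⟨by linarith [ht.1], ht.2⟩
      rwa [if_neg (not_le.mpr ht.1)] at hbt
    have h3 : (∫ t in (0:ℝ)..(T - r₀), g 0 * Real.exp (2 * K * t)) = g 0 * C := by
      rw [intervalIntegral.integral_const_mul, hC_eq]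
    linarith
  -- the moving-window integral
  set H : ℝ → ℝ := fun t => ∫ u in (t - r₀)..t, g' u with hHdef
  have hHcont : Continuous H := by
    have hp : Continuous fun b => ∫ u in (-r₀)..b, g' u :=
      hg'int.continuous_primitive (-r₀)
    have he : ∀ t, ((∫ u in (-r₀)..t, g' u) - ∫ u in (-r₀)..(t - r₀), g' u) = H t :=
      fun t => intervalIntegral.integral_interval_sub_left (II _ _) (II _ _)
    exact (hp.sub (hp.comp (continuous_sub_right r₀))).congr he
  have hA1 : ∀ t ∈ Set.Icc (0:ℝ) r₀, H t ≤ (∫ s in (-r₀)..0, g' s) + g 0 * C := by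
    intro t ht
    have e1 : H t = (∫ u in (t - r₀)..(0:ℝ), g' u) + ∫ u in (0:ℝ)..t, g' u :=
      (intervalIntegral.integral_add_adjacent_intervals (II _ _) (II _ _)).symm
    have e2 : (∫ s in (-r₀)..(0:ℝ), g' s) =
        (∫ u in (-r₀)..(t - r₀), g' u) + ∫ u in (t - r₀)..(0:ℝ), g' u :=
      (intervalIntegral.integral_add_adjacent_intervals (II _ _) (II _ _)).symm
    have e3 : (∫ t in (0:ℝ)..T, g' t) =
        (∫ u in (0:ℝ)..t, g' u) + ∫ u in t..T, g' u :=
      (intervalIntegral.integral_add_adjacent_intervals (II _ _) (II _ _)).symm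
    have n1 := hnn (-r₀) (t - r₀) (by linarith [ht.1])
    have n2 := hnn t T (by linarith [ht.2])
    linarith
  have hA2 : ∀ t ∈ Set.Icc r₀ T, H t ≤ g 0 * C := by
    intro t ht
    have e3 : (∫ u in (0:ℝ)..T, g' u) =
        ((∫ u in (0:ℝ)..(t - r₀), g' u) + ∫ u in (t - r₀)..t, g' u) + ∫ u in t..T, g' u := by
      rw [intervalIntegral.integral_add_adjacent_intervals (II _ _) (II _ _),
        intervalIntegral.integral_add_adjacent_intervals (II _ _) (II _ _)]
    have n1 := hnn 0 (t - r₀) (by linarith [ht.1])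
    have n2 := hnn t T ht.2
    have : H t = ∫ u in (t - r₀)..t, g' u := rfl
    linarith
  -- rewrite the integrand
  have key : (∫ t in (0:ℝ)..T, ((∫ s in (-r₀)..0, g (t + s)) + g t)) =
      ∫ t in (0:ℝ)..T, (H t + g' t) := by
    apply intervalIntegral.integral_congr
    intro t ht
    rw [uIcc_of_le hT0] at ht
    have e1 : (∫ s in (-r₀)..0, g (t + s)) = ∫ u in (t + -r₀)..(t + 0), g u :=
      intervalIntegral.integral_comp_add_left g t
    have e2 : (∫ u in (t + -r₀)..(t + 0), g u) = ∫ u in (t - r₀)..t, g u := by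
      norm_num [sub_eq_add_neg]
    have e3 : (∫ u in (t - r₀)..t, g u) = H t := by
      apply intervalIntegral.integral_congr
      intro u hu
      rw [uIcc_of_le (by linarith [ht.1] : t - r₀ ≤ t)] at hu
      exact (hgeq u ⟨by linarith [hu.1, ht.1], by linarith [hu.2, ht.2]⟩).symm
    have e4 : g t = g' t := (hgeq t ⟨by linarith [ht.1], ht.2⟩).symm
    simp only [e1, e2, e3, e4]
  have eI0 : (∫ s in (-r₀)..0, g s) = ∫ s in (-r₀)..0, g' s := by
    apply intervalIntegral.integral_congr
    intro u hu
    rw [uIcc_of_le (by linarith : -r₀ ≤ (0:ℝ))] at hu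
    exact (hgeq u ⟨hu.1, by linarith [hu.2]⟩).symm
  rw [key, eI0]
  have hsplit : (∫ t in (0:ℝ)..T, (H t + g' t)) =
      (∫ t in (0:ℝ)..T, H t) + ∫ t in (0:ℝ)..T, g' t :=
    intervalIntegral.integral_add (hHcont.intervalIntegrable _ _) (II _ _)
  have hHsplit : (∫ t in (0:ℝ)..T, H t) =
      (∫ t in (0:ℝ)..r₀, H t) + ∫ t in r₀..T, H t :=
    (intervalIntegral.integral_add_adjacent_intervals
      (hHcont.intervalIntegrable _ _) (hHcont.intervalIntegrable _ _)).symm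
  have hH1 : (∫ t in (0:ℝ)..r₀, H t) ≤ r₀ * ((∫ s in (-r₀)..0, g' s) + g 0 * C) := by
    have := intervalIntegral.integral_mono_on hr₀ (hHcont.intervalIntegrable _ _)
      (intervalIntegrable_const (μ := volume)) hA1
    simp only [intervalIntegral.integral_const, sub_zero, smul_eq_mul] at this
    linarith
  have hH2 : (∫ t in r₀..T, H t) ≤ (T - r₀) * (g 0 * C) := by
    have := intervalIntegral.integral_mono_on hT (hHcont.intervalIntegrable _ _)
      (intervalIntegrable_const (μ := volume)) hA2
    simp only [intervalIntegral.integral_const, smul_eq_mul] at this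
    linarith
  have hr0g : 0 ≤ r₀ * g 0 := mul_nonneg hr₀ (hg 0)
  nlinarith [hsplit, hHsplit, hH1, hH2, hB]


theorem stmt5 (d : ℕ) (r₀ T K : ℝ) (hr₀ : 0 ≤ r₀) (hT : r₀ ≤ T)
    (x y : ℝ → EuclideanSpace ℝ (Fin d)) (Γ : ℝ → ℝ)
    (hint : IntegrableOn (fun s => ‖x s - y s‖^2) (Set.Icc (-r₀) T))
    (hΓ : ∀ s ∈ Set.Icc (0:ℝ) (T - r₀), 0 ≤ Γ s ∧ Γ s ≤ Real.exp (K * s))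
    (hbound : ∀ t ∈ Set.Icc (0:ℝ) T,
      ‖x t - y t‖^2 ≤
        if t ≤ T - r₀ then ‖x 0 - y 0‖^2 * (Γ t)^2 else 0) :
    (∫ t in (0:ℝ)..T, segNormSqV d r₀ (fun s => x s - y s) t) ≤
      r₀ * segNormSqV d r₀ (fun s => x s - y s) 0 +
      (T + 1) * (if K = 0 then T - r₀ else
        (Real.exp (2 * K * (T - r₀)) - 1) / (2 * K)) * ‖x 0 - y 0‖^2 := by
  have hg : ∀ t, (0:ℝ) ≤ ‖x t - y t‖^2 := fun t => by positivity
  have hb : ∀ t ∈ Set.Icc (0:ℝ) T, ‖x t - y t‖^2 ≤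
      if t ≤ T - r₀ then ‖x 0 - y 0‖^2 * Real.exp (2 * K * t) else 0 := by
    intro t ht
    have hbt := hbound t ht
    split_ifs with h
    · rw [if_pos h] at hbt
      refine le_trans hbt ?_
      obtain ⟨h1, h2⟩ := hΓ t ⟨ht.1, h⟩
      have he : Real.exp (2 * K * t) = Real.exp (K * t) * Real.exp (K * t) := by
        rw [← Real.exp_add]; ring_nf
      have hΓ2 : (Γ t)^2 ≤ Real.exp (2 * K * t) := by
        rw [he, sq]
        exact mul_le_mul h2 h2 h1 (Real.exp_nonneg _)
      exact mul_le_mul_of_nonneg_left hΓ2 (hg 0)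
    · rwa [if_neg h] at hbt
  have := aux5 r₀ T K hr₀ hT (fun s => ‖x s - y s‖^2) hg hint hb
  simpa only [segNormSqV, zero_add] using this
end

section
/- Let μ and ν be probability measures on a measurable space E. Then 2‖μ - ν‖_var² ≤ Ent(ν | μ), where ‖μ - ν‖_var := sup over measurable sets A of |μ(A) - ν(A)| and Ent(ν|μ) := ∫ log(dν/dμ) dν if ν ≪ μ, and +∞ otherwise. (Pinsker's inequality.) -/
open MeasureTheory Real

lemma aux_h_mono : MonotoneOn (fun x : ℝ => (x + 1) * Real.log x - 2 * (x - 1)) (Set.Ioi 0) := by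
  have hderiv : ∀ x ∈ Set.Ioi (0:ℝ),
      HasDerivAt (fun x : ℝ => (x + 1) * Real.log x - 2 * (x - 1))
        (Real.log x + (1 + 1 / x - 2)) x := by
    intro x hx
    have hx0 : (x:ℝ) ≠ 0 := ne_of_gt hx
    have h1 : HasDerivAt (fun x : ℝ => (x + 1) * Real.log x)
        (1 * Real.log x + (x + 1) * x⁻¹) x :=
      ((hasDerivAt_id x).add_const 1).mul (Real.hasDerivAt_log hx0)
    have h2 : HasDerivAt (fun x : ℝ => 2 * (x - 1)) (2 * 1) x :=
      ((hasDerivAt_id x).sub_const 1).const_mul 2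
    exact (h1.sub h2).congr_deriv (by rw [add_mul, mul_inv_cancel₀ hx0]; ring)
  apply monotoneOn_of_deriv_nonneg (convex_Ioi 0)
  · intro x hx
    exact (hderiv x hx).continuousAt.continuousWithinAt
  · rw [interior_Ioi]
    intro x hx
    exact (hderiv x hx).differentiableAt.differentiableWithinAt
  · rw [interior_Ioi]
    intro x hx
    rw [(hderiv x hx).deriv]
    have hx0 : (0:ℝ) < x := hx
    have hlog : Real.log x⁻¹ ≤ x⁻¹ - 1 := Real.log_le_sub_one_of_pos (by positivity)
    rw [Real.log_inv] at hlog
    have : 1 - 1 / x ≤ Real.log x := by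
      rw [one_div]; linarith
    linarith [this]

lemma aux_key (x : ℝ) (hx : 0 ≤ x) :
    3 * (x - 1) ^ 2 ≤ (2 * x + 4) * (x * Real.log x - x + 1) := by
  set φ : ℝ → ℝ := fun x => (2 * x + 4) * (x * Real.log x - x + 1) - 3 * (x - 1) ^ 2 with hφ
  have hφ1 : φ 1 = 0 := by simp [hφ]
  have hcont : Continuous φ := by
    apply Continuous.sub
    · exact ((continuous_const.mul continuous_id).add continuous_const).mul
        ((Real.continuous_mul_log.sub continuous_id).add continuous_const)
    · exact continuous_const.mul ((continuous_id.sub continuous_const).pow 2)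
  have hderiv : ∀ y : ℝ, 0 < y →
      HasDerivAt φ (4 * ((y + 1) * Real.log y - 2 * (y - 1))) y := by
    intro y hy
    have hy0 : (y:ℝ) ≠ 0 := ne_of_gt hy
    have h1 : HasDerivAt (fun x : ℝ => x * Real.log x - x + 1)
        (Real.log y + 1 - 1) y := ((Real.hasDerivAt_mul_log hy0).sub (hasDerivAt_id y)).add_const 1
    have h2 : HasDerivAt (fun x : ℝ => 2 * x + 4) 2 y := by
      simpa using ((hasDerivAt_id y).const_mul 2).add_const 4
    have h3 : HasDerivAt (fun x : ℝ => 3 * (x - 1) ^ 2) (3 * (2 * (y - 1))) y := by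
      simpa using (((hasDerivAt_id y).sub_const 1).pow 2).const_mul 3
    have := (h2.mul h1).sub h3
    exact this.congr_deriv (by ring)
  have hzero : (fun x : ℝ => (x + 1) * Real.log x - 2 * (x - 1)) 1 = 0 := by simp
  rcases le_or_gt x 1 with hx1 | hx1
  · -- antitone on [0,1]
    have hanti : AntitoneOn φ (Set.Icc 0 1) := by
      apply antitoneOn_of_deriv_nonpos (convex_Icc 0 1) hcont.continuousOn
      · rw [interior_Icc]
        intro y hy
        exact (hderiv y hy.1).differentiableAt.differentiableWithinAt
      · rw [interior_Icc]
        intro y hy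
        rw [(hderiv y hy.1).deriv]
        have := aux_h_mono (Set.mem_Ioi.mpr hy.1) (Set.mem_Ioi.mpr one_pos) hy.2.le
        rw [hzero] at this
        dsimp only at this
        linarith
    have := hanti ⟨hx, hx1⟩ ⟨zero_le_one, le_refl 1⟩ hx1
    rw [hφ1] at this
    simp only [hφ] at this
    linarith
  · -- monotone on [1,∞)
    have hmono : MonotoneOn φ (Set.Ici 1) := by
      apply monotoneOn_of_deriv_nonneg (convex_Ici 1) hcont.continuousOn
      · rw [interior_Ici]
        intro y hy
        exact (hderiv y (lt_trans one_pos hy)).differentiableAt.differentiableWithinAt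
      · rw [interior_Ici]
        intro y hy
        rw [(hderiv y (lt_trans one_pos hy)).deriv]
        have := aux_h_mono (Set.mem_Ioi.mpr one_pos)
          (Set.mem_Ioi.mpr (lt_trans one_pos hy)) (le_of_lt hy)
        rw [hzero] at this
        dsimp only at this
        linarith
    have := hmono (Set.mem_Ici.mpr (le_refl 1)) (Set.mem_Ici.mpr hx1.le) hx1.le
    rw [hφ1] at this
    simp only [hφ] at this
    linarith

lemma aux_nonneg (x : ℝ) (hx : 0 ≤ x) : 0 ≤ x * Real.log x - x + 1 := by
  nlinarith [aux_key x hx, sq_nonneg (x - 1)]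

lemma aux_sqrt (x : ℝ) (hx : 0 ≤ x) :
    |x - 1| ≤ Real.sqrt ((2 * x + 4) / 3) * Real.sqrt (x * Real.log x - x + 1) := by
  rw [← Real.sqrt_mul (by positivity), ← Real.sqrt_sq_eq_abs]
  apply Real.sqrt_le_sqrt
  nlinarith [aux_key x hx]

theorem stmt7 {E : Type*} [MeasurableSpace E]
    (μ ν : Measure E) [IsProbabilityMeasure μ] [IsProbabilityMeasure ν]
    (hac : ν ≪ μ)
    (hint : Integrable (fun x => Real.log ((ν.rnDeriv μ x).toReal)) ν) :
    ∀ A : Set E, MeasurableSet A →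
      2 * |(μ A).toReal - (ν A).toReal| ^ 2 ≤
        ∫ x, Real.log ((ν.rnDeriv μ x).toReal) ∂ν := by
  intro A hA
  set f : E → ℝ := fun x => (ν.rnDeriv μ x).toReal with hf_def
  have hf_meas : Measurable f := (Measure.measurable_rnDeriv ν μ).ennreal_toReal
  have hf_nonneg : ∀ x, 0 ≤ f x := fun x => ENNReal.toReal_nonneg
  have hf_int : Integrable f μ := Measure.integrable_toReal_rnDeriv
  have hf_integral : ∫ x, f x ∂μ = 1 := by
    rw [hf_def, Measure.integral_toReal_rnDeriv hac]
    simp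
  -- KL expressed under μ
  have hKL_eq : ∫ x, Real.log (f x) ∂ν = ∫ x, f x * Real.log (f x) ∂μ := by
    rw [← integral_rnDeriv_smul hac (f := fun x => Real.log (f x))]
    simp [smul_eq_mul]
    rfl
  have hKL_int : Integrable (fun x => f x * Real.log (f x)) μ := by
    have := (integrable_rnDeriv_smul_iff (f := fun x => Real.log (f x)) hac).mpr hint
    simpa [smul_eq_mul] using this
  set K : ℝ := ∫ x, f x * Real.log (f x) ∂μ with hK_def
  -- the set-difference bound
  have hg_int : Integrable (fun x => 1 - f x) μ := (integrable_const 1).sub hf_int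
  have hνA : (ν A).toReal = ∫ x in A, f x ∂μ :=
    (Measure.setIntegral_toReal_rnDeriv hac A).symm
  have hμA : (μ A).toReal = ∫ x in A, (1:ℝ) ∂μ := by
    rw [setIntegral_const, smul_eq_mul, mul_one]
    rfl
  have hdiff : (μ A).toReal - (ν A).toReal = ∫ x in A, (1 - f x) ∂μ := by
    rw [hμA, hνA, integral_sub (integrable_const 1).integrableOn hf_int.integrableOn]
  have htotal : (∫ x in A, (1 - f x) ∂μ) + (∫ x in Aᶜ, (1 - f x) ∂μ) = 0 := by
    rw [integral_add_compl hA hg_int]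
    rw [integral_sub (integrable_const 1) hf_int, hf_integral]
    simp
  have habs1 : |∫ x in A, (1 - f x) ∂μ| ≤ ∫ x in A, |1 - f x| ∂μ := by
    simpa [Real.norm_eq_abs] using
      norm_integral_le_integral_norm (μ := μ.restrict A) (fun x => 1 - f x)
  have habs2 : |∫ x in Aᶜ, (1 - f x) ∂μ| ≤ ∫ x in Aᶜ, |1 - f x| ∂μ := by
    simpa [Real.norm_eq_abs] using
      norm_integral_le_integral_norm (μ := μ.restrict Aᶜ) (fun x => 1 - f x)
  have hVsplit : (∫ x in A, |1 - f x| ∂μ) + (∫ x in Aᶜ, |1 - f x| ∂μ)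
      = ∫ x, |1 - f x| ∂μ := integral_add_compl hA hg_int.abs
  set V : ℝ := ∫ x, |1 - f x| ∂μ with hV_def
  have hTV : 2 * |(μ A).toReal - (ν A).toReal| ≤ V := by
    rw [hdiff]
    have h2 : |∫ x in Aᶜ, (1 - f x) ∂μ| = |∫ x in A, (1 - f x) ∂μ| := by
      rw [show (∫ x in Aᶜ, (1 - f x) ∂μ) = -(∫ x in A, (1 - f x) ∂μ) by linarith, abs_neg]
    calc 2 * |∫ x in A, (1 - f x) ∂μ|
        = |∫ x in A, (1 - f x) ∂μ| + |∫ x in Aᶜ, (1 - f x) ∂μ| := by rw [h2]; ring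
      _ ≤ (∫ x in A, |1 - f x| ∂μ) + (∫ x in Aᶜ, |1 - f x| ∂μ) := add_le_add habs1 habs2
      _ = V := hVsplit
  -- Cauchy-Schwarz step
  set F : E → ℝ := fun x => Real.sqrt ((2 * f x + 4) / 3) with hF_def
  set G : E → ℝ := fun x => Real.sqrt (f x * Real.log (f x) - f x + 1) with hG_def
  have hF_meas : Measurable F := (((hf_meas.const_mul 2).add_const 4).div_const 3).sqrt
  have hG_meas : Measurable G :=
    (((hf_meas.mul (Real.measurable_log.comp hf_meas)).sub hf_meas).add_const 1).sqrt
  have hFsq_int : Integrable (fun x => (2 * f x + 4) / 3) μ :=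
    ((hf_int.const_mul 2).add (integrable_const 4)).div_const 3
  have hGsq_int : Integrable (fun x => f x * Real.log (f x) - f x + 1) μ :=
    (hKL_int.sub hf_int).add (integrable_const 1)
  have hF_mem : MemLp F 2 μ := by
    rw [memLp_two_iff_integrable_sq hF_meas.aestronglyMeasurable]
    have : (fun x => F x ^ 2) = fun x => (2 * f x + 4) / 3 := by
      funext x
      rw [hF_def, Real.sq_sqrt (by positivity)]
    rw [this]; exact hFsq_int
  have hG_mem : MemLp G 2 μ := by
    rw [memLp_two_iff_integrable_sq hG_meas.aestronglyMeasurable]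
    have : (fun x => G x ^ 2) = fun x => f x * Real.log (f x) - f x + 1 := by
      funext x
      rw [hG_def, Real.sq_sqrt (aux_nonneg _ (hf_nonneg x))]
    rw [this]; exact hGsq_int
  have hpq : (2:ℝ).HolderConjugate 2 := by
    constructor <;> norm_num
  have hCS : ∫ x, F x * G x ∂μ ≤
      (∫ x, F x ^ (2:ℝ) ∂μ) ^ (1/(2:ℝ)) * (∫ x, G x ^ (2:ℝ) ∂μ) ^ (1/(2:ℝ)) := by
    apply integral_mul_le_Lp_mul_Lq_of_nonneg hpq
    · exact Filter.Eventually.of_forall fun x => Real.sqrt_nonneg _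
    · exact Filter.Eventually.of_forall fun x => Real.sqrt_nonneg _
    · simpa using hF_mem
    · simpa using hG_mem
  have hFsq_val : ∫ x, F x ^ (2:ℝ) ∂μ = 2 := by
    have : ∀ x, F x ^ (2:ℝ) = (2 * f x + 4) / 3 := by
      intro x
      rw [Real.rpow_two, hF_def, Real.sq_sqrt (by positivity)]
    simp_rw [this]
    rw [integral_div, integral_add (hf_int.const_mul 2) (integrable_const 4),
      integral_const_mul, hf_integral]
    simp
    norm_num
  have hGsq_val : ∫ x, G x ^ (2:ℝ) ∂μ = K := by
    have : ∀ x, G x ^ (2:ℝ) = f x * Real.log (f x) - f x + 1 := by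
      intro x
      rw [Real.rpow_two, hG_def, Real.sq_sqrt (aux_nonneg _ (hf_nonneg x))]
    simp_rw [this]
    have e1 : Integrable (fun x => f x * Real.log (f x) - f x) μ := hKL_int.sub hf_int
    rw [integral_add e1 (integrable_const 1),
      integral_sub hKL_int hf_int, hf_integral]
    simp [hK_def]
  have hK_nonneg : 0 ≤ K := by
    rw [← hGsq_val]
    exact integral_nonneg fun x => Real.rpow_nonneg (Real.sqrt_nonneg _) _
  have hV_le : V ≤ Real.sqrt 2 * Real.sqrt K := by
    have hptw : ∀ x, |1 - f x| ≤ F x * G x := by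
      intro x
      rw [abs_sub_comm]
      exact aux_sqrt (f x) (hf_nonneg x)
    have hFG_int : Integrable (fun x => F x * G x) μ := by
      apply Integrable.mono' ((hFsq_int.add hGsq_int).div_const 2)
        (hF_meas.mul hG_meas).aestronglyMeasurable
      apply Filter.Eventually.of_forall
      intro x
      have h1 : F x ^ 2 = (2 * f x + 4) / 3 := by
        rw [hF_def, Real.sq_sqrt (by positivity)]
      have h2 : G x ^ 2 = f x * Real.log (f x) - f x + 1 := by
        rw [hG_def, Real.sq_sqrt (aux_nonneg _ (hf_nonneg x))]
      have h3 : F x * G x ≤ (F x ^ 2 + G x ^ 2) / 2 := by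
        nlinarith [sq_nonneg (F x - G x)]
      rw [Real.norm_eq_abs, Pi.mul_apply, Pi.add_apply, abs_of_nonneg (mul_nonneg (Real.sqrt_nonneg _) (Real.sqrt_nonneg _) : 0 ≤ F x * G x)]
      rw [h1, h2] at h3
      exact h3
    have h1 : V ≤ ∫ x, F x * G x ∂μ := by
      apply integral_mono hg_int.abs hFG_int
      exact hptw
    calc V ≤ ∫ x, F x * G x ∂μ := h1
      _ ≤ (∫ x, F x ^ (2:ℝ) ∂μ) ^ (1/(2:ℝ)) * (∫ x, G x ^ (2:ℝ) ∂μ) ^ (1/(2:ℝ)) := hCS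
      _ = Real.sqrt 2 * Real.sqrt K := by
          rw [hFsq_val, hGsq_val, ← Real.sqrt_eq_rpow, ← Real.sqrt_eq_rpow]
  -- conclude
  have hV_nonneg : 0 ≤ V := integral_nonneg fun x => abs_nonneg _
  have hVsq : V ^ 2 ≤ 2 * K := by
    have := mul_self_le_mul_self hV_nonneg hV_le
    calc V ^ 2 = V * V := sq V
      _ ≤ (Real.sqrt 2 * Real.sqrt K) * (Real.sqrt 2 * Real.sqrt K) := this
      _ = (Real.sqrt 2 * Real.sqrt 2) * (Real.sqrt K * Real.sqrt K) := by ring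
      _ = 2 * K := by
          rw [Real.mul_self_sqrt (by norm_num), Real.mul_self_sqrt hK_nonneg]
  rw [hKL_eq]
  nlinarith [hTV, hVsq, abs_nonneg ((μ A).toReal - (ν A).toReal)]
end
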